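/- Let Φ ⊆ 𝒳 be nonempty and let ε > 0. If the obfuscation mechanism f satisfies ε-DP on Φ, then for every observed pseudo-location x' ∈ 𝒳, min_{x̂∈𝒳} ∑_{x∈Φ} (Pr(x|x')/∑_{y∈Φ} Pr(y|x')) d(x̂,x) ≥ e^{−ε} · E'(Φ). -/
import Mathlib


open Finset

noncomputable section

/-- Points of the Euclidean plane. -/
abbrev Pt : Type := EuclideanSpace ℝ (Fin 2)

/-- if `f` satisfies `ε`-DP on a nonempty `Φ ⊆ X`, then for every observed `x'`,
`min_{xh ∈ X} ∑_{x ∈ Φ} (Pr(x|x')/∑_{y∈Φ} Pr(y|x')) d(xh,x) ≥ e^{-ε} · E'(Φ)`. -/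
theorem stmt2
    (X : Finset Pt) (hX : X.Nonempty)
    (pr : Pt → ℝ) (hprpos : ∀ x ∈ X, 0 < pr x) (hprsum : ∑ x ∈ X, pr x = 1)
    (f : Pt → Pt → ℝ)  -- `f x' x` denotes f(x' | x)
    (hfpos : ∀ x ∈ X, ∀ x' ∈ X, 0 < f x' x)
    (hfsum : ∀ x ∈ X, ∑ x' ∈ X, f x' x = 1)
    (Φ : Finset Pt) (hΦ : Φ.Nonempty) (hΦX : Φ ⊆ X)
    (ε : ℝ) (hε : 0 < ε)
    (hDP : ∀ x ∈ Φ, ∀ y ∈ Φ, ∀ x' ∈ X, f x' x ≤ Real.exp ε * f x' y)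
    (x' : Pt) (hx' : x' ∈ X)
    (post : Pt → ℝ)  -- `post x` denotes the posterior Pr(x | x')
    (hpost : ∀ x, post x = pr x * f x' x / ∑ y ∈ X, pr y * f x' y)
    :
    Real.exp (-ε) * X.inf' hX (fun xh => ∑ x ∈ Φ, (pr x / ∑ y ∈ Φ, pr y) * dist xh x) ≤
      X.inf' hX (fun xh => ∑ x ∈ Φ, (post x / ∑ y ∈ Φ, post y) * dist xh x) := by

  have hZpos : 0 < ∑ y ∈ X, pr y * f x' y :=
    Finset.sum_pos (fun y hy => mul_pos (hprpos y hy) (hfpos y hy x' hx')) hX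
  have hS : 0 < ∑ y ∈ Φ, pr y :=
    Finset.sum_pos (fun y hy => hprpos y (hΦX hy)) hΦ
  have hT : 0 < ∑ y ∈ Φ, pr y * f x' y :=
    Finset.sum_pos (fun y hy => mul_pos (hprpos y (hΦX hy)) (hfpos y (hΦX hy) x' hx')) hΦ
  have hpostΦ : ∑ y ∈ Φ, post y = (∑ y ∈ Φ, pr y * f x' y) / ∑ y ∈ X, pr y * f x' y := by
    rw [Finset.sum_div]; exact Finset.sum_congr rfl fun y _ => hpost y
  have hexp : Real.exp (-ε) * Real.exp ε = 1 := by
    rw [← Real.exp_add]; simp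
  have key : ∀ x ∈ Φ, Real.exp (-ε) * (pr x / ∑ y ∈ Φ, pr y) ≤
      post x / ∑ y ∈ Φ, post y := by
    intro x hx
    have hratio : post x / ∑ y ∈ Φ, post y = pr x * f x' x / ∑ y ∈ Φ, pr y * f x' y := by
      rw [hpost x, hpostΦ]
      field_simp
    rw [hratio, ← mul_div_assoc, div_le_div_iff₀ hS hT]
    have h1 : ∑ y ∈ Φ, pr y * f x' y ≤ Real.exp ε * f x' x * ∑ y ∈ Φ, pr y := by
      rw [Finset.mul_sum]
      refine Finset.sum_le_sum fun y hy => ?_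
      have := hDP y hy x hx x' hx'
      nlinarith [hprpos y (hΦX hy)]
    have hprx := hprpos x (hΦX hx)
    have h2 := mul_le_mul_of_nonneg_left h1
      (by positivity : (0:ℝ) ≤ Real.exp (-ε) * pr x)
    have h3 : Real.exp (-ε) * pr x * (Real.exp ε * f x' x * ∑ y ∈ Φ, pr y)
        = pr x * f x' x * ∑ y ∈ Φ, pr y := by
      calc Real.exp (-ε) * pr x * (Real.exp ε * f x' x * ∑ y ∈ Φ, pr y)
          = (Real.exp (-ε) * Real.exp ε) * (pr x * f x' x * ∑ y ∈ Φ, pr y) := by ring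
        _ = pr x * f x' x * ∑ y ∈ Φ, pr y := by rw [hexp]; ring
    linarith
  refine Finset.le_inf' _ _ fun xh hxh => ?_
  calc Real.exp (-ε) * X.inf' hX (fun xh => ∑ x ∈ Φ, (pr x / ∑ y ∈ Φ, pr y) * dist xh x)
      ≤ Real.exp (-ε) * ∑ x ∈ Φ, (pr x / ∑ y ∈ Φ, pr y) * dist xh x :=
        mul_le_mul_of_nonneg_left (Finset.inf'_le _ hxh) (Real.exp_pos _).le
    _ = ∑ x ∈ Φ, (Real.exp (-ε) * (pr x / ∑ y ∈ Φ, pr y)) * dist xh x := by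
        rw [Finset.mul_sum]; exact Finset.sum_congr rfl fun x _ => by ring
    _ ≤ ∑ x ∈ Φ, (post x / ∑ y ∈ Φ, post y) * dist xh x :=
        Finset.sum_le_sum fun x hx =>
          mul_le_mul_of_nonneg_right (key x hx) dist_nonneg
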